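/- arXiv:2312.06938 — 2 statements merged into one kernel-verified Lean document; each statement's English description precedes it below -/
import Mathlib

section
/- Let Q := {(a,b,1) ∈ ℝ³ : max(|a|,|b|) = 1} and let B := {t·q : q ∈ Q, t ≥ 0} be the cone over Q with vertex 0, and let A₁⁺ := {(x,y,z) ∈ ℝ³ : x² + y² = z², z ≥ 0}. Then L𝒢D_0(A₁⁺) = {(x,y,z) ∈ ℝ³ : z² ≤ x² + y²}, while L𝒢D_0(B) = τ₁ ∪ τ₂ ∪ τ₃ ∪ τ₄, where τ₁, τ₂, τ₃, τ₄ are the planes in ℝ³ defined by x − z = 0, y + z = 0, x + z = 0 and y − z = 0 respectively. -/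
open Filter Topology Set Asymptotics

variable {E : Type*} [NormedAddCommGroup E] [NormedSpace ℝ E]

/-- The direction set `D_p(A)`. -/
def dirSet (A : Set E) (p : E) : Set E :=
  {a | ‖a‖ = 1 ∧ ∃ x : ℕ → E, (∀ i, x i ∈ A ∧ x i ≠ p) ∧
    Tendsto x atTop (𝓝 p) ∧
    Tendsto (fun i => ‖x i - p‖⁻¹ • (x i - p)) atTop (𝓝 a)}

/-- The real tangent cone `LD_p(A)`. -/
def LDir (A : Set E) (p : E) : Set E :=
  {w | ∃ a ∈ dirSet A p, ∃ t : ℝ, 0 ≤ t ∧ w = t • a}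

/-- Condition (SSP) at `p`. -/
def SSP (A : Set E) (p : E) : Prop :=
  ∀ a : ℕ → E, (∀ m, a m ≠ p) → Tendsto a atTop (𝓝 p) →
    (∃ d ∈ dirSet A p, Tendsto (fun m => ‖a m - p‖⁻¹ • (a m - p)) atTop (𝓝 d)) →
    ∃ b : ℕ → E, (∀ m, b m ∈ A) ∧
      Tendsto (fun m => ‖a m - b m‖ / ‖a m - p‖) atTop (𝓝 0) ∧
      Tendsto (fun m => ‖a m - b m‖ / ‖b m - p‖) atTop (𝓝 0)

/-- The geometric directional bundle fiber `𝒢D_p(A)`. -/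
def GDir (A : Set E) (p : E) : Set E :=
  {a | ‖a‖ = 1 ∧ ∃ q : ℕ → E, (∀ m, q m ∈ A) ∧ Tendsto q atTop (𝓝 p) ∧
    ∃ u : ℕ → E, (∀ m, u m ∈ dirSet A (q m)) ∧ Tendsto u atTop (𝓝 a)}

/-- The cone `L𝒢D_p(A)` over the geometric directional bundle fiber. -/
def LGDir (A : Set E) (p : E) : Set E :=
  {w | ∃ a ∈ GDir A p, ∃ t : ℝ, 0 ≤ t ∧ w = t • a}

/-- A bi-Lipschitz homeomorphism of `E`: a bijection which is Lipschitz with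
Lipschitz inverse (equivalently, antilipschitz). -/
def IsBiLipschitz (h : E → E) : Prop :=
  Function.Bijective h ∧ ∃ K K' : NNReal, LipschitzWith K h ∧ AntilipschitzWith K' h

abbrev E3' := EuclideanSpace ℝ (Fin 3)

noncomputable def mk3 (a b c : ℝ) : E3' := (WithLp.equiv 2 (Fin 3 → ℝ)).symm ![a,b,c]

@[simp] lemma mk3_0 (a b c : ℝ) : mk3 a b c 0 = a := rfl

@[simp] lemma mk3_1 (a b c : ℝ) : mk3 a b c 1 = b := rfl

@[simp] lemma mk3_2 (a b c : ℝ) : mk3 a b c 2 = c := rfl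

lemma smul_apply3 (c : ℝ) (v : E3') (j : Fin 3) : (c • v) j = c * v j := rfl

lemma sub_apply3 (v w : E3') (j : Fin 3) : (v - w) j = v j - w j := rfl

lemma add_apply3 (v w : E3') (j : Fin 3) : (v + w) j = v j + w j := rfl

lemma norm3 (x : E3') : ‖x‖ = Real.sqrt (x 0^2 + x 1^2 + x 2^2) := by
  rw [EuclideanSpace.norm_eq]; simp [Fin.sum_univ_three, Real.norm_eq_abs, sq_abs]

lemma normsq3 (x : E3') (h : ‖x‖ = 1) : x 0^2 + x 1^2 + x 2^2 = 1 := by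
  have := norm3 x
  rw [h] at this
  nlinarith [Real.sq_sqrt (by positivity : (0:ℝ) ≤ x 0^2 + x 1^2 + x 2^2), this.symm]

lemma mem_dirSet_of {A : Set E3'} {q a : E3'} (ha : ‖a‖ = 1) (s : ℕ → ℝ)
    (hs : ∀ i, 0 < s i) (hs0 : Tendsto s atTop (𝓝 0)) (y : ℕ → E3')
    (hy : ∀ i, y i ∈ A)
    (hF : Tendsto (fun i => (s i)⁻¹ • (y i - q)) atTop (𝓝 a)) : a ∈ dirSet A q := by
  set F : ℕ → E3' := fun i => (s i)⁻¹ • (y i - q) with hFdef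
  have hyq : ∀ i, y i = q + s i • F i := by
    intro i
    simp only [hFdef, smul_inv_smul₀ (ne_of_gt (hs i))]
    abel
  have hFn : Tendsto (fun i => ‖F i‖) atTop (𝓝 1) := by
    simpa [ha] using hF.norm
  have hev : ∀ᶠ i in atTop, (1:ℝ)/2 < ‖F i‖ := hFn.eventually_const_lt (by norm_num)
  obtain ⟨N, hN⟩ := eventually_atTop.1 hev
  refine ⟨ha, fun i => y (i + N), fun i => ⟨hy _, ?_⟩, ?_, ?_⟩
  · intro hcon
    have h0 : F (i + N) = 0 := by
      simp only [hFdef, hcon, sub_self, smul_zero]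
    have := hN (i + N) (Nat.le_add_left N i)
    rw [h0] at this; simp at this; linarith
  · have : Tendsto (fun i => q + s i • F i) atTop (𝓝 (q + (0:ℝ) • a)) :=
      tendsto_const_nhds.add (hs0.smul hF)
    simp only [zero_smul, add_zero] at this
    have := this.comp (tendsto_add_atTop_nat N)
    refine this.congr (fun i => ?_)
    simp only [Function.comp]
    exact (hyq (i + N)).symm
  · have key : ∀ i, ‖y i - q‖⁻¹ • (y i - q) = ‖F i‖⁻¹ • F i := by
      intro i
      have h1 : y i - q = s i • F i := by rw [hyq i]; abel
      rw [h1, norm_smul, Real.norm_eq_abs, abs_of_pos (hs i), smul_smul]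
      congr 1
      have hsne : s i ≠ 0 := (hs i).ne'
      field_simp
    have hlim : Tendsto (fun i => ‖F i‖⁻¹ • F i) atTop (𝓝 ((1:ℝ)⁻¹ • a)) :=
      (hFn.inv₀ one_ne_zero).smul hF
    simp only [inv_one, one_smul] at hlim
    have := hlim.comp (tendsto_add_atTop_nat N)
    refine this.congr (fun i => ?_)
    simp only [Function.comp]
    exact (key (i + N)).symm

lemma slope_tendsto {f : ℝ → ℝ} {f' : ℝ} (h : HasDerivAt f f' 0) :
    Tendsto (fun s => s⁻¹ * (f s - f 0)) (𝓝[>] 0) (𝓝 f') := by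
  have h1 := hasDerivAt_iff_tendsto_slope.1 h
  have hsub : Set.Ioi (0:ℝ) ⊆ {(0:ℝ)}ᶜ := fun x hx => ne_of_gt hx
  have h2 := h1.mono_left (nhdsWithin_mono 0 hsub)
  refine h2.congr (fun s => ?_)
  simp [slope_def_field, div_eq_inv_mul]

-- derivative of the circle-curve coordinates

lemma deriv_coord_cos (r c θ d : ℝ) :
    HasDerivAt (fun t => (r + t * c) * Real.cos (θ + t * d))
      (c * Real.cos θ - (r * d) * Real.sin θ) 0 := by
  have h1 : HasDerivAt (fun t : ℝ => r + t * c) c 0 :=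
    (hasDerivAt_mul_const c).const_add r
  have hin : HasDerivAt (fun t : ℝ => θ + t * d) d 0 :=
    (hasDerivAt_mul_const d).const_add θ
  have h2 : HasDerivAt (fun t : ℝ => Real.cos (θ + t * d)) (-Real.sin (θ + 0 * d) * d) 0 :=
    by have := (Real.hasDerivAt_cos (θ + 0 * d)).comp 0 hin; exact this
  have := h1.fun_mul h2
  simp only [zero_mul, add_zero, mul_zero] at this ⊢
  refine this.congr_deriv ?_
  ring

lemma deriv_coord_sin (r c θ d : ℝ) :
    HasDerivAt (fun t => (r + t * c) * Real.sin (θ + t * d))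
      (c * Real.sin θ + (r * d) * Real.cos θ) 0 := by
  have h1 : HasDerivAt (fun t : ℝ => r + t * c) c 0 :=
    (hasDerivAt_mul_const c).const_add r
  have hin : HasDerivAt (fun t : ℝ => θ + t * d) d 0 :=
    (hasDerivAt_mul_const d).const_add θ
  have h2 : HasDerivAt (fun t : ℝ => Real.sin (θ + t * d)) (Real.cos (θ + 0 * d) * d) 0 :=
    by have := (Real.hasDerivAt_sin (θ + 0 * d)).comp 0 hin; exact this
  have := h1.fun_mul h2
  simp only [zero_mul, add_zero, mul_zero] at this ⊢
  refine this.congr_deriv ?_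
  ring

noncomputable def setA : Set E3' := {v | v 0 ^ 2 + v 1 ^ 2 = v 2 ^ 2 ∧ 0 ≤ v 2}

lemma mem_dirSetA (r θ : ℝ) (hr : 0 < r) (a : E3') (ha : ‖a‖ = 1)
    (hθ : a 0 * Real.cos θ + a 1 * Real.sin θ = a 2) :
    a ∈ dirSet setA (mk3 (r * Real.cos θ) (r * Real.sin θ) r) := by
  have hsq := normsq3 a ha
  set c : ℝ := a 2 with hc
  set d : ℝ := (a 1 * Real.cos θ - a 0 * Real.sin θ) / r with hd
  have hrd : r * d = a 1 * Real.cos θ - a 0 * Real.sin θ := by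
    rw [hd]; field_simp
  have hpyth := Real.sin_sq_add_cos_sq θ
  set s : ℕ → ℝ := fun i => r / (2 * (i + 1)) with hsdef
  have hs : ∀ i, 0 < s i := fun i => by positivity
  have hs0 : Tendsto s atTop (𝓝 0) := by
    have h1 := tendsto_one_div_add_atTop_nhds_zero_nat.const_mul (r/2)
    rw [mul_zero] at h1
    refine h1.congr (fun i => ?_)
    rw [hsdef]
    field_simp
  have hsle : ∀ i, s i ≤ r / 2 := by
    intro i
    rw [hsdef, div_le_div_iff₀ (by positivity) (by norm_num)]
    nlinarith [Nat.cast_nonneg (α := ℝ) i]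
  have hcb : -1 ≤ c ∧ c ≤ 1 := by constructor <;> nlinarith [sq_nonneg (a 0), sq_nonneg (a 1)]
  set y : ℕ → E3' := fun i => mk3 ((r + s i * c) * Real.cos (θ + s i * d))
    ((r + s i * c) * Real.sin (θ + s i * d)) (r + s i * c) with hydef
  have hrs : ∀ i, r / 2 ≤ r + s i * c := by
    intro i
    nlinarith [hs i, hsle i, hcb.1, hcb.2]
  have hy : ∀ i, y i ∈ setA := by
    intro i
    constructor
    · show ((r + s i * c) * Real.cos (θ + s i * d))^2 +
        ((r + s i * c) * Real.sin (θ + s i * d))^2 = (r + s i * c)^2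
      have := Real.sin_sq_add_cos_sq (θ + s i * d)
      linear_combination (r + s i * c)^2 * this
    · show (0:ℝ) ≤ r + s i * c
      linarith [hrs i]
  have hst : Tendsto s atTop (𝓝[>] (0:ℝ)) :=
    tendsto_nhdsWithin_of_tendsto_nhds_of_eventually_within _ hs0
      (Eventually.of_forall fun i => hs i)
  refine mem_dirSet_of ha s hs hs0 y hy ?_
  rw [nhds_induced, tendsto_comap_iff, tendsto_pi_nhds]
  intro j
  fin_cases j
  · -- coordinate 0
    have H := (slope_tendsto (deriv_coord_cos r c θ d)).comp hst
    have e0 : c * Real.cos θ - (r*d) * Real.sin θ = a 0 := by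
      rw [hrd, hc]
      linear_combination Real.cos θ * hθ.symm + a 0 * hpyth
    rw [e0] at H
    refine H.congr (fun i => ?_)
    show (s i)⁻¹ * ((r + s i * c) * Real.cos (θ + s i * d) - (r + 0 * c) * Real.cos (θ + 0 * d))
      = ((s i)⁻¹ • (y i - mk3 (r * Real.cos θ) (r * Real.sin θ) r)) 0
    rw [smul_apply3, sub_apply3, hydef]
    norm_num
  · -- coordinate 1
    have H := (slope_tendsto (deriv_coord_sin r c θ d)).comp hst
    have e1 : c * Real.sin θ + (r*d) * Real.cos θ = a 1 := by
      rw [hrd, hc]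
      linear_combination Real.sin θ * hθ.symm + a 1 * hpyth
    rw [e1] at H
    refine H.congr (fun i => ?_)
    show (s i)⁻¹ * ((r + s i * c) * Real.sin (θ + s i * d) - (r + 0 * c) * Real.sin (θ + 0 * d))
      = ((s i)⁻¹ • (y i - mk3 (r * Real.cos θ) (r * Real.sin θ) r)) 1
    rw [smul_apply3, sub_apply3, hydef]
    norm_num
  · -- coordinate 2
    have H : Tendsto (fun i => (s i)⁻¹ * ((r + s i * c) - r)) atTop (𝓝 (a 2)) := by
      refine tendsto_const_nhds.congr (fun i => ?_)
      rw [hc]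
      field_simp
      rw [eq_div_iff (hs i).ne']; ring
    refine H.congr (fun i => ?_)
    show (s i)⁻¹ * ((r + s i * c) - r)
      = ((s i)⁻¹ • (y i - mk3 (r * Real.cos θ) (r * Real.sin θ) r)) 2
    rw [smul_apply3, sub_apply3, hydef]
    norm_num

lemma exists_theta (a : E3') (ha : ‖a‖ = 1) (h2 : a 2 ^ 2 ≤ a 0 ^ 2 + a 1 ^ 2) :
    ∃ θ, a 0 * Real.cos θ + a 1 * Real.sin θ = a 2 := by
  have hsq := normsq3 a ha
  set ρ : ℝ := Real.sqrt (a 0 ^ 2 + a 1 ^ 2) with hρ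
  have hρsq : ρ ^ 2 = a 0 ^ 2 + a 1 ^ 2 := Real.sq_sqrt (by positivity)
  have hρpos : 0 < ρ := by
    rcases lt_or_eq_of_le (Real.sqrt_nonneg _) with h | h
    · exact h
    · exfalso; nlinarith [hρsq]
  set z : ℂ := ⟨a 0, a 1⟩ with hz
  have hzne : z ≠ 0 := by
    intro h
    have h0 : a 0 = 0 := congrArg Complex.re h
    have h1 : a 1 = 0 := congrArg Complex.im h
    nlinarith [hρsq]
  have habs : ‖z‖ = ρ := by
    rw [Complex.norm_def, Complex.normSq_apply, hρ]
    norm_num [sq]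
    rfl
  have hcos : Real.cos z.arg = a 0 / ρ := by rw [Complex.cos_arg hzne, habs]
  have hsin : Real.sin z.arg = a 1 / ρ := by rw [Complex.sin_arg, habs]
  have hdiv : -1 ≤ a 2 / ρ ∧ a 2 / ρ ≤ 1 := by
    constructor
    · rw [le_div_iff₀ hρpos]; nlinarith
    · rw [div_le_one hρpos]; nlinarith
  refine ⟨z.arg + Real.arccos (a 2 / ρ), ?_⟩
  rw [Real.cos_add, Real.sin_add, Real.cos_arccos hdiv.1 hdiv.2, hcos, hsin]
  have hsinacos := Real.sin_arccos (a 2 / ρ)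
  field_simp
  ring_nf
  linear_combination (-(a 2)) * hρsq

lemma mem_GDirA (a : E3') (ha : ‖a‖ = 1) (h2 : a 2 ^ 2 ≤ a 0 ^ 2 + a 1 ^ 2) :
    a ∈ GDir setA 0 := by
  obtain ⟨θ, hθ⟩ := exists_theta a ha h2
  have hpos : ∀ m : ℕ, (0:ℝ) < 1 / (m + 1) := fun m => by positivity
  refine ⟨ha, fun m => mk3 ((1/(m+1:ℝ)) * Real.cos θ) ((1/(m+1:ℝ)) * Real.sin θ) (1/(m+1:ℝ)),
    fun m => ?_, ?_, fun _ => a, fun m => mem_dirSetA _ θ (hpos m) a ha hθ, tendsto_const_nhds⟩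
  · constructor
    · show ((1/(m+1:ℝ)) * Real.cos θ)^2 + ((1/(m+1:ℝ)) * Real.sin θ)^2 = (1/(m+1:ℝ))^2
      linear_combination (1/(m+1:ℝ))^2 * Real.sin_sq_add_cos_sq θ
    · exact le_of_lt (hpos m)
  · rw [nhds_induced, tendsto_comap_iff, tendsto_pi_nhds]
    intro j
    have hbase : Tendsto (fun m : ℕ => 1/(m+1:ℝ)) atTop (𝓝 0) :=
      tendsto_one_div_add_atTop_nhds_zero_nat
    fin_cases j
    · simpa using hbase.mul_const (Real.cos θ)
    · simpa using hbase.mul_const (Real.sin θ)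
    · simpa using hbase

lemma tendsto_coord {ι : Type*} {l : Filter ι} {f : ι → E3'} {a : E3'}
    (h : Tendsto f l (𝓝 a)) (j : Fin 3) : Tendsto (fun i => f i j) l (𝓝 (a j)) :=
  tendsto_pi_nhds.1 ((PiLp.continuous_ofLp 2 _).tendsto a |>.comp h) j

lemma dirSetA_sub (q : E3') (hq : q ∈ setA) :
    dirSet setA q ⊆ {v : E3' | v 2 ^ 2 ≤ v 0 ^ 2 + v 1 ^ 2} := by
  rintro u ⟨hu1, x, hx, hxq, hxd⟩
  have key : ∀ i, (‖x i - q‖⁻¹ • (x i - q)) 2 ^ 2 ≤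
      (‖x i - q‖⁻¹ • (x i - q)) 0 ^ 2 + (‖x i - q‖⁻¹ • (x i - q)) 1 ^ 2 := by
    intro i
    obtain ⟨hxA, _⟩ := hx i
    obtain ⟨he, hz⟩ := hxA
    obtain ⟨he', hz'⟩ := hq
    simp only [smul_apply3, sub_apply3]
    have base : (x i 2 - q 2)^2 ≤ (x i 0 - q 0)^2 + (x i 1 - q 1)^2 := by
      nlinarith [sq_nonneg (x i 0 * q 1 - x i 1 * q 0), mul_nonneg hz hz',
        sq_nonneg (x i 0 * q 0 + x i 1 * q 1 + x i 2 * q 2),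
        sq_nonneg (x i 0 * q 0 + x i 1 * q 1 - x i 2 * q 2)]
    nlinarith [sq_nonneg (‖x i - q‖⁻¹), base]
  have h0 := (tendsto_coord hxd 0).pow 2
  have h1 := (tendsto_coord hxd 1).pow 2
  have h2 := (tendsto_coord hxd 2).pow 2
  exact le_of_tendsto_of_tendsto' h2 (h0.add h1) key

lemma closedC : IsClosed {v : E3' | v 2 ^ 2 ≤ v 0 ^ 2 + v 1 ^ 2} := by
  apply isClosed_le
  · exact ((continuous_apply (2 : Fin 3)).comp (PiLp.continuous_ofLp 2 (fun _ : Fin 3 => ℝ))).pow 2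
  · exact (((continuous_apply (0 : Fin 3)).comp (PiLp.continuous_ofLp 2 (fun _ : Fin 3 => ℝ))).pow 2).add
      (((continuous_apply (1 : Fin 3)).comp (PiLp.continuous_ofLp 2 (fun _ : Fin 3 => ℝ))).pow 2)

lemma GDirA_sub : GDir setA 0 ⊆ {v : E3' | v 2 ^ 2 ≤ v 0 ^ 2 + v 1 ^ 2} := by
  rintro a ⟨ha1, q, hqA, hq0, u, hu, hua⟩
  exact closedC.mem_of_tendsto hua (Filter.Eventually.of_forall fun m =>
    dirSetA_sub (q m) (hqA m) (hu m))

noncomputable def setB : Set E3' := {w | ∃ q : E3',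
  (max |q 0| |q 1| = 1 ∧ q 2 = 1) ∧ ∃ t : ℝ, 0 ≤ t ∧ w = t • q}

lemma limit_in_plane (L : E3' → ℝ) (hL : Continuous L)
    (hsub : ∀ v w : E3', L (v - w) = L v - L w)
    (hsmul : ∀ (c : ℝ) (v : E3'), L (c • v) = c * L v)
    {q u : E3'} {x : ℕ → E3'} (hfreq : ∃ᶠ i in atTop, L (x i) = 0)
    (hxq : Tendsto x atTop (𝓝 q))
    (hxd : Tendsto (fun i => ‖x i - q‖⁻¹ • (x i - q)) atTop (𝓝 u)) : L u = 0 := by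
  obtain ⟨φ, hφmono, hφ⟩ := Filter.extraction_of_frequently_atTop hfreq
  have hφtop : Tendsto φ atTop atTop := hφmono.tendsto_atTop
  have hq : L q = 0 := by
    have h1 : Tendsto (fun i => L (x (φ i))) atTop (𝓝 (L q)) :=
      (hL.tendsto q).comp (hxq.comp hφtop)
    have h2 : Tendsto (fun i => L (x (φ i))) atTop (𝓝 0) := by
      refine tendsto_const_nhds.congr (fun i => (hφ i).symm)
    exact tendsto_nhds_unique h1 h2
  have h3 : Tendsto (fun i => L (‖x (φ i) - q‖⁻¹ • (x (φ i) - q))) atTop (𝓝 (L u)) :=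
    (hL.tendsto u).comp (hxd.comp hφtop)
  have h4 : Tendsto (fun i => L (‖x (φ i) - q‖⁻¹ • (x (φ i) - q))) atTop (𝓝 0) := by
    refine tendsto_const_nhds.congr (fun i => ?_)
    rw [hsmul, hsub, hφ i, hq]
    ring
  exact tendsto_nhds_unique h3 h4

lemma B_cases (w : E3') (hw : w ∈ setB) :
    w 0 - w 2 = 0 ∨ w 1 + w 2 = 0 ∨ w 0 + w 2 = 0 ∨ w 1 - w 2 = 0 := by
  obtain ⟨q, ⟨hmax, hq2⟩, t, ht, rfl⟩ := hw
  simp only [smul_apply3]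
  rcases max_cases |q 0| |q 1| with ⟨h1, _⟩ | ⟨h1, _⟩ <;> rw [h1] at hmax
  · rcases abs_eq (by norm_num : (0:ℝ) ≤ 1) |>.1 hmax with h | h
    · left; rw [h, hq2]; ring
    · right; right; left; rw [h, hq2]; ring
  · rcases abs_eq (by norm_num : (0:ℝ) ≤ 1) |>.1 hmax with h | h
    · right; right; right; rw [h, hq2]; ring
    · right; left; rw [h, hq2]; ring

lemma contL0 : Continuous (fun v : E3' => v 0 - v 2) := by
  exact (((continuous_apply (0 : Fin 3)).comp (PiLp.continuous_ofLp 2 (fun _ : Fin 3 => ℝ)))).sub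
    (((continuous_apply (2 : Fin 3)).comp (PiLp.continuous_ofLp 2 (fun _ : Fin 3 => ℝ))))

lemma contL1 : Continuous (fun v : E3' => v 1 + v 2) := by
  exact (((continuous_apply (1 : Fin 3)).comp (PiLp.continuous_ofLp 2 (fun _ : Fin 3 => ℝ)))).add
    (((continuous_apply (2 : Fin 3)).comp (PiLp.continuous_ofLp 2 (fun _ : Fin 3 => ℝ))))

lemma contL2 : Continuous (fun v : E3' => v 0 + v 2) := by
  exact (((continuous_apply (0 : Fin 3)).comp (PiLp.continuous_ofLp 2 (fun _ : Fin 3 => ℝ)))).add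
    (((continuous_apply (2 : Fin 3)).comp (PiLp.continuous_ofLp 2 (fun _ : Fin 3 => ℝ))))

lemma contL3 : Continuous (fun v : E3' => v 1 - v 2) := by
  exact (((continuous_apply (1 : Fin 3)).comp (PiLp.continuous_ofLp 2 (fun _ : Fin 3 => ℝ)))).sub
    (((continuous_apply (2 : Fin 3)).comp (PiLp.continuous_ofLp 2 (fun _ : Fin 3 => ℝ))))

lemma dirSetB_sub (q : E3') :
    dirSet setB q ⊆ {v : E3' | v 0 - v 2 = 0} ∪ {v : E3' | v 1 + v 2 = 0} ∪
      {v : E3' | v 0 + v 2 = 0} ∪ {v : E3' | v 1 - v 2 = 0} := by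
  rintro u ⟨hu1, x, hx, hxq, hxd⟩
  have hall : ∀ i, (fun v : E3' => v 0 - v 2) (x i) = 0 ∨ (fun v : E3' => v 1 + v 2) (x i) = 0 ∨
      (fun v : E3' => v 0 + v 2) (x i) = 0 ∨ (fun v : E3' => v 1 - v 2) (x i) = 0 :=
    fun i => B_cases (x i) (hx i).1
  have hfreq : (∃ᶠ i in atTop, (fun v : E3' => v 0 - v 2) (x i) = 0) ∨
      (∃ᶠ i in atTop, (fun v : E3' => v 1 + v 2) (x i) = 0) ∨
      (∃ᶠ i in atTop, (fun v : E3' => v 0 + v 2) (x i) = 0) ∨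
      (∃ᶠ i in atTop, (fun v : E3' => v 1 - v 2) (x i) = 0) := by
    by_contra hcon
    push_neg at hcon
    obtain ⟨h1, h2, h3, h4⟩ := hcon
    have := ((h1.and h2).and (h3.and h4)).and (Filter.Eventually.of_forall hall)
    rcases this.exists with ⟨i, ⟨⟨e1, e2⟩, ⟨e3, e4⟩⟩, hc⟩
    tauto
  rcases hfreq with h | h | h | h
  · exact Or.inl (Or.inl (Or.inl (limit_in_plane _ contL0
      (fun v w => by simp [sub_apply3]; ring) (fun c v => by simp [smul_apply3]; ring) h hxq hxd)))
  · exact Or.inl (Or.inl (Or.inr (limit_in_plane _ contL1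
      (fun v w => by simp [sub_apply3]; ring) (fun c v => by simp [smul_apply3]; ring) h hxq hxd)))
  · exact Or.inl (Or.inr (limit_in_plane _ contL2
      (fun v w => by simp [sub_apply3]; ring) (fun c v => by simp [smul_apply3]; ring) h hxq hxd))
  · exact Or.inr (limit_in_plane _ contL3
      (fun v w => by simp [sub_apply3]; ring) (fun c v => by simp [smul_apply3]; ring) h hxq hxd)

noncomputable def planeU : Set E3' := {v : E3' | v 0 - v 2 = 0} ∪ {v : E3' | v 1 + v 2 = 0} ∪
      {v : E3' | v 0 + v 2 = 0} ∪ {v : E3' | v 1 - v 2 = 0}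

lemma closedU : IsClosed planeU := by
  refine IsClosed.union (IsClosed.union (IsClosed.union ?_ ?_) ?_) ?_
  · exact isClosed_eq contL0 continuous_const
  · exact isClosed_eq contL1 continuous_const
  · exact isClosed_eq contL2 continuous_const
  · exact isClosed_eq contL3 continuous_const

lemma GDirB_sub : GDir setB 0 ⊆ planeU := by
  rintro a ⟨ha1, q, hqB, hq0, u, hu, hua⟩
  exact closedU.mem_of_tendsto hua (Filter.Eventually.of_forall fun m =>
    dirSetB_sub (q m) (hu m))

lemma abs1 (x : E3') (h : ‖x‖ = 1) :
    (-1 ≤ x 0 ∧ x 0 ≤ 1) ∧ (-1 ≤ x 1 ∧ x 1 ≤ 1) ∧ (-1 ≤ x 2 ∧ x 2 ≤ 1) := by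
  have := normsq3 x h
  refine ⟨⟨?_, ?_⟩, ⟨?_, ?_⟩, ⟨?_, ?_⟩⟩ <;>
    nlinarith [sq_nonneg (x 0), sq_nonneg (x 1), sq_nonneg (x 2)]

lemma stepB_x (ε : ℝ) (hε : ε = 1 ∨ ε = -1) (a : E3') (ha : ‖a‖ = 1)
    (hcond : a 0 = ε * a 2) (t s : ℝ) (ht : 0 < t) (hs : 0 < s) (hst : s ≤ t / 3) :
    t • mk3 ε 0 1 + s • a ∈ setB := by
  obtain ⟨hb0, hb1, hb2⟩ := abs1 a ha
  have ht' : 0 < t + s * a 2 := by nlinarith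
  refine ⟨mk3 ε (s * a 1 / (t + s * a 2)) 1, ⟨?_, rfl⟩, t + s * a 2, le_of_lt ht', ?_⟩
  · rw [max_eq_left, mk3_0]
    · rcases hε with h | h <;> rw [h] <;> norm_num
    · rw [mk3_0, mk3_1]
      rcases hε with h | h <;> rw [h] <;>
      · rw [abs_div, abs_of_pos ht', div_le_iff₀ ht']
        have : |s * a 1| ≤ s := by
          rw [abs_mul, abs_of_pos hs]
          nlinarith [abs_le.2 ⟨hb1.1, hb1.2⟩]
        norm_num
        nlinarith [this, abs_mul s (a 1)]
  · ext j
    fin_cases j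
    · show t * ε + s * a 0 = (t + s * a 2) * ε
      rw [hcond]; ring
    · show t * 0 + s * a 1 = (t + s * a 2) * (s * a 1 / (t + s * a 2))
      field_simp
      ring
    · show t * 1 + s * a 2 = (t + s * a 2) * 1
      ring

lemma stepB_y (ε : ℝ) (hε : ε = 1 ∨ ε = -1) (a : E3') (ha : ‖a‖ = 1)
    (hcond : a 1 = ε * a 2) (t s : ℝ) (ht : 0 < t) (hs : 0 < s) (hst : s ≤ t / 3) :
    t • mk3 0 ε 1 + s • a ∈ setB := by
  obtain ⟨hb0, hb1, hb2⟩ := abs1 a ha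
  have ht' : 0 < t + s * a 2 := by nlinarith
  refine ⟨mk3 (s * a 0 / (t + s * a 2)) ε 1, ⟨?_, rfl⟩, t + s * a 2, le_of_lt ht', ?_⟩
  · rw [max_eq_right, mk3_1]
    · rcases hε with h | h <;> rw [h] <;> norm_num
    · rw [mk3_0, mk3_1]
      rcases hε with h | h <;> rw [h] <;>
      · rw [abs_div, abs_of_pos ht', div_le_iff₀ ht']
        have : |s * a 0| ≤ s := by
          rw [abs_mul, abs_of_pos hs]
          nlinarith [abs_le.2 ⟨hb0.1, hb0.2⟩]
        norm_num
        nlinarith [this, abs_mul s (a 0)]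
  · ext j
    fin_cases j
    · show t * 0 + s * a 0 = (t + s * a 2) * (s * a 0 / (t + s * a 2))
      field_simp
      ring
    · show t * ε + s * a 1 = (t + s * a 2) * ε
      rw [hcond]; ring
    · show t * 1 + s * a 2 = (t + s * a 2) * 1
      ring

lemma mem_GDirB_gen (a b : E3') (ha : ‖a‖ = 1)
    (hbB : ∀ t : ℝ, 0 < t → t • b ∈ setB)
    (hstep : ∀ t s : ℝ, 0 < t → 0 < s → s ≤ t / 3 → t • b + s • a ∈ setB) :
    a ∈ GDir setB 0 := by
  have hpos : ∀ m : ℕ, (0:ℝ) < 1 / (m + 1) := fun m => by positivity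
  refine ⟨ha, fun m => (1/(m+1:ℝ)) • b, fun m => hbB _ (hpos m), ?_, fun _ => a,
    fun m => ?_, tendsto_const_nhds⟩
  · have h1 : Tendsto (fun m : ℕ => (1/(m+1:ℝ)) • b) atTop (𝓝 ((0:ℝ) • b)) :=
      tendsto_one_div_add_atTop_nhds_zero_nat.smul_const b
    rwa [zero_smul] at h1
  · set t : ℝ := 1/(m+1:ℝ) with htm
    have htpos : 0 < t := hpos m
    set s : ℕ → ℝ := fun i => t / (3 * (i + 1)) with hsdef
    have hs : ∀ i, 0 < s i := fun i => by positivity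
    have hs0 : Tendsto s atTop (𝓝 0) := by
      have h1 := tendsto_one_div_add_atTop_nhds_zero_nat.const_mul (t/3)
      rw [mul_zero] at h1
      refine h1.congr (fun i => ?_)
      rw [hsdef]
      field_simp
    refine mem_dirSet_of ha s hs hs0 (fun i => t • b + s i • a) (fun i => ?_) ?_
    · refine hstep t (s i) htpos (hs i) ?_
      rw [hsdef, div_le_div_iff₀ (by positivity) (by norm_num)]
      nlinarith [Nat.cast_nonneg (α := ℝ) i, htpos]
    · refine tendsto_const_nhds.congr (fun i => ?_)
      rw [add_sub_cancel_left, inv_smul_smul₀ (ne_of_gt (hs i))]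

lemma baseB_x (ε : ℝ) (hε : ε = 1 ∨ ε = -1) : ∀ t : ℝ, 0 < t → t • mk3 ε 0 1 ∈ setB :=
  fun t ht => ⟨mk3 ε 0 1, ⟨by rcases hε with h | h <;> rw [h] <;> norm_num, rfl⟩,
    t, le_of_lt ht, rfl⟩

lemma baseB_y (ε : ℝ) (hε : ε = 1 ∨ ε = -1) : ∀ t : ℝ, 0 < t → t • mk3 0 ε 1 ∈ setB :=
  fun t ht => ⟨mk3 0 ε 1, ⟨by rcases hε with h | h <;> rw [h] <;> norm_num, rfl⟩,
    t, le_of_lt ht, rfl⟩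

lemma mem_GDirB_x (ε : ℝ) (hε : ε = 1 ∨ ε = -1) (a : E3') (ha : ‖a‖ = 1)
    (hcond : a 0 = ε * a 2) : a ∈ GDir setB 0 :=
  mem_GDirB_gen a (mk3 ε 0 1) ha (baseB_x ε hε)
    (fun t s ht hs hst => stepB_x ε hε a ha hcond t s ht hs hst)

lemma mem_GDirB_y (ε : ℝ) (hε : ε = 1 ∨ ε = -1) (a : E3') (ha : ‖a‖ = 1)
    (hcond : a 1 = ε * a 2) : a ∈ GDir setB 0 :=
  mem_GDirB_gen a (mk3 0 ε 1) ha (baseB_y ε hε)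
    (fun t s ht hs hst => stepB_y ε hε a ha hcond t s ht hs hst)

lemma norm_e1 : ‖mk3 0 1 0‖ = 1 := by
  rw [norm3]; norm_num

theorem stmtB :
    LGDir setB 0
        = {v : E3' | v 0 - v 2 = 0} ∪ {v : E3' | v 1 + v 2 = 0} ∪
          {v : E3' | v 0 + v 2 = 0} ∪ {v : E3' | v 1 - v 2 = 0} := by
  ext v
  constructor
  · rintro ⟨a, haG, t, ht, rfl⟩
    have hU := GDirB_sub haG
    rcases hU with ((h | h) | h) | h
    · exact Or.inl (Or.inl (Or.inl (by
        simp only [Set.mem_setOf_eq, smul_apply3] at h ⊢; linear_combination t * h)))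
    · exact Or.inl (Or.inl (Or.inr (by
        simp only [Set.mem_setOf_eq, smul_apply3] at h ⊢; linear_combination t * h)))
    · exact Or.inl (Or.inr (by
        simp only [Set.mem_setOf_eq, smul_apply3] at h ⊢; linear_combination t * h))
    · exact Or.inr (by
        simp only [Set.mem_setOf_eq, smul_apply3] at h ⊢; linear_combination t * h)
  · intro hv
    by_cases hv0 : v = 0
    · refine ⟨mk3 0 1 0, mem_GDirB_x 1 (Or.inl rfl) _ norm_e1 (by norm_num), 0,
        le_refl 0, by rw [hv0, zero_smul]⟩
    · have hne : ‖v‖ ≠ 0 := norm_ne_zero_iff.2 hv0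
      have ha : ‖(‖v‖⁻¹ • v)‖ = 1 := norm_smul_inv_norm hv0
      have hvsmul : v = ‖v‖ • (‖v‖⁻¹ • v) := (smul_inv_smul₀ hne v).symm
      rcases hv with ((h | h) | h) | h
      · refine ⟨‖v‖⁻¹ • v, mem_GDirB_x 1 (Or.inl rfl) _ ha ?_, ‖v‖, norm_nonneg v, hvsmul⟩
        simp only [Set.mem_setOf_eq] at h
        simp only [smul_apply3]
        linear_combination ‖v‖⁻¹ * h
      · refine ⟨‖v‖⁻¹ • v, mem_GDirB_y (-1) (Or.inr rfl) _ ha ?_, ‖v‖, norm_nonneg v, hvsmul⟩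
        simp only [Set.mem_setOf_eq] at h
        simp only [smul_apply3]
        linear_combination ‖v‖⁻¹ * h
      · refine ⟨‖v‖⁻¹ • v, mem_GDirB_x (-1) (Or.inr rfl) _ ha ?_, ‖v‖, norm_nonneg v, hvsmul⟩
        simp only [Set.mem_setOf_eq] at h
        simp only [smul_apply3]
        linear_combination ‖v‖⁻¹ * h
      · refine ⟨‖v‖⁻¹ • v, mem_GDirB_y 1 (Or.inl rfl) _ ha ?_, ‖v‖, norm_nonneg v, hvsmul⟩
        simp only [Set.mem_setOf_eq] at h
        simp only [smul_apply3]
        linear_combination ‖v‖⁻¹ * h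

theorem stmtA : LGDir setA 0 = {v : E3' | v 2 ^ 2 ≤ v 0 ^ 2 + v 1 ^ 2} := by
  ext v
  constructor
  · rintro ⟨a, haG, t, ht, rfl⟩
    have hC := GDirA_sub haG
    simp only [Set.mem_setOf_eq, smul_apply3] at hC ⊢
    nlinarith [sq_nonneg t]
  · intro hv
    simp only [Set.mem_setOf_eq] at hv
    by_cases hv0 : v = 0
    · refine ⟨mk3 0 1 0, mem_GDirA _ norm_e1 (by norm_num), 0, le_refl 0, by
        rw [hv0, zero_smul]⟩
    · have hne : ‖v‖ ≠ 0 := norm_ne_zero_iff.2 hv0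
      have ha : ‖(‖v‖⁻¹ • v)‖ = 1 := norm_smul_inv_norm hv0
      refine ⟨‖v‖⁻¹ • v, mem_GDirA _ ha ?_, ‖v‖, norm_nonneg v, (smul_inv_smul₀ hne v).symm⟩
      simp only [smul_apply3]
      nlinarith [hv, sq_nonneg (‖v‖⁻¹)]

theorem stmt15 :
    LGDir {v : EuclideanSpace ℝ (Fin 3) | v 0 ^ 2 + v 1 ^ 2 = v 2 ^ 2 ∧ 0 ≤ v 2} 0
        = {v : EuclideanSpace ℝ (Fin 3) | v 2 ^ 2 ≤ v 0 ^ 2 + v 1 ^ 2} ∧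
    LGDir {w : EuclideanSpace ℝ (Fin 3) | ∃ q : EuclideanSpace ℝ (Fin 3),
          (max |q 0| |q 1| = 1 ∧ q 2 = 1) ∧ ∃ t : ℝ, 0 ≤ t ∧ w = t • q} 0
        = {v : EuclideanSpace ℝ (Fin 3) | v 0 - v 2 = 0} ∪
          {v : EuclideanSpace ℝ (Fin 3) | v 1 + v 2 = 0} ∪
          {v : EuclideanSpace ℝ (Fin 3) | v 0 + v 2 = 0} ∪
          {v : EuclideanSpace ℝ (Fin 3) | v 1 - v 2 = 0} := by
  exact ⟨stmtA, stmtB⟩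
end

section
/- Let (a_n)_{n≥1} be an enumeration of ℚ ∩ [0,1] and define f : [0,1] → ℝ by f(x) := Σ_{n≥1} 2^{−n}·(x − a_n)^{1/3}, where t^{1/3} denotes the real cube root. Then: (1) f is continuous and strictly increasing, hence a homeomorphism onto [f(0), f(1)]; (2) its inverse g : [f(0), f(1)] → [0,1] is Lipschitz; (3) g is differentiable at every point of the open interval (f(0), f(1)); (4) g′(f(a_n)) = 0 for every n with a_n ∈ (0,1), so the zero set of g′ is dense in (f(0), f(1)); (5) g′ does not vanish identically on (f(0), f(1)). -/
open Filter Topology Set Asymptotics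

variable {E : Type*} [NormedAddCommGroup E] [NormedSpace ℝ E]

/-- The real cube root of a real number. -/
noncomputable def cbrt (t : ℝ) : ℝ :=
  if 0 ≤ t then t ^ ((1 : ℝ) / 3) else -((-t) ^ ((1 : ℝ) / 3))


lemma cube_strictMono : StrictMono (fun x : ℝ => x ^ 3) :=
  Odd.strictMono_pow (by decide)

lemma cbrt_cube (t : ℝ) : cbrt t ^ 3 = t := by
  unfold cbrt
  split_ifs with h
  · rw [← Real.rpow_natCast (t ^ ((1:ℝ)/3)) 3, ← Real.rpow_mul h]
    norm_num
  · push_neg at h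
    have h' : (0:ℝ) ≤ -t := by linarith
    rw [neg_pow, ← Real.rpow_natCast ((-t) ^ ((1:ℝ)/3)) 3, ← Real.rpow_mul h']
    norm_num

lemma cbrt_strictMono : StrictMono cbrt := by
  intro s t hst
  by_contra hc
  push_neg at hc
  have := cube_strictMono.monotone hc
  simp only [cbrt_cube] at this
  linarith

lemma cbrt_zero : cbrt 0 = 0 := by
  have h : (cbrt 0)^3 = (0:ℝ)^3 := by rw [cbrt_cube]; norm_num
  exact cube_strictMono.injective h

lemma cbrt_mul (s t : ℝ) : cbrt (s * t) = cbrt s * cbrt t := by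
  have h : (cbrt (s*t))^3 = (cbrt s * cbrt t)^3 := by
    rw [mul_pow, cbrt_cube, cbrt_cube, cbrt_cube]
  exact cube_strictMono.injective h

lemma cbrt_pow (t : ℝ) (n : ℕ) : cbrt (t ^ n) = cbrt t ^ n := by
  have h : (cbrt (t^n))^3 = (cbrt t ^ n)^3 := by
    rw [cbrt_cube, ← pow_mul, mul_comm n 3, pow_mul, cbrt_cube]
  exact cube_strictMono.injective h

lemma cbrt_abs_le (t : ℝ) : |cbrt t| ≤ 1 + |t| := by
  have h1 : |cbrt t| ^ 3 = |t| := by rw [← abs_pow, cbrt_cube]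
  nlinarith [abs_nonneg (cbrt t), sq_nonneg (|cbrt t| - 1), sq_nonneg (|cbrt t| + 1)]

lemma cbrt_continuous : Continuous cbrt := by
  unfold cbrt
  apply Continuous.if_le
  · exact Real.continuous_rpow_const (by norm_num)
  · exact ((Real.continuous_rpow_const (by norm_num)).comp continuous_neg).neg
  · exact continuous_const
  · exact continuous_id
  · intro x hx; simp [← hx]

lemma cbrt_slope {s t : ℝ} (h : s ≠ t) :
    (cbrt s - cbrt t) / (s - t) = ((cbrt s)^2 + cbrt s * cbrt t + (cbrt t)^2)⁻¹ := by
  have hu : cbrt s ≠ cbrt t := fun hc => h (cbrt_strictMono.injective hc)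
  have hq : (cbrt s)^2 + cbrt s * cbrt t + (cbrt t)^2 ≠ 0 := by
    intro hc
    apply hu
    nlinarith [sq_nonneg (cbrt s - cbrt t), sq_nonneg (cbrt s + cbrt t), sq_nonneg (cbrt s),
      sq_nonneg (cbrt t)]
  have hst : s - t = (cbrt s - cbrt t) * ((cbrt s)^2 + cbrt s * cbrt t + (cbrt t)^2) := by
    nlinarith [cbrt_cube s, cbrt_cube t]
  rw [hst, div_mul_eq_div_div, div_self (sub_ne_zero.2 hu), one_div]

lemma cbrt_abs_le_one {t : ℝ} (ht : |t| ≤ 1) : |cbrt t| ≤ 1 := by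
  by_contra h'
  push_neg at h'
  have : (1:ℝ) < |cbrt t| ^ 3 := one_lt_pow₀ h' (by norm_num)
  rw [← abs_pow, cbrt_cube] at this
  linarith

lemma cbrt_key {s t : ℝ} (hs : |s| ≤ 1) (ht : |t| ≤ 1) (h : t ≤ s) :
    s - t ≤ 3 * (cbrt s - cbrt t) := by
  have h1 := abs_le.1 (cbrt_abs_le_one hs)
  have h2 := abs_le.1 (cbrt_abs_le_one ht)
  have huv : cbrt t ≤ cbrt s := cbrt_strictMono.monotone h
  have hq : (cbrt s)^2 + cbrt s * cbrt t + (cbrt t)^2 ≤ 3 := by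
    nlinarith [h1.1, h1.2, h2.1, h2.2]
  nlinarith [cbrt_cube s, cbrt_cube t, mul_le_mul_of_nonneg_left hq (sub_nonneg.2 huv)]

lemma hasDerivAt_cbrt {s : ℝ} (hs : s ≠ 0) :
    HasDerivAt cbrt (3 * (cbrt s)^2)⁻¹ s := by
  have hc : cbrt s ≠ 0 := by
    intro h; apply hs; rw [← cbrt_cube s, h]; norm_num
  have hcube : HasDerivAt (fun u : ℝ => u ^ 3) (3 * (cbrt s)^2) (cbrt s) := by
    simpa using hasDerivAt_pow 3 (cbrt s)
  exact HasDerivAt.of_local_left_inverse cbrt_continuous.continuousAt hcube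
    (by positivity) (Eventually.of_forall cbrt_cube)

/-- Pompeiu-type example. -/
theorem stmt19 (a : ℕ → ℝ)
    (ha : Set.range a = Set.Icc (0 : ℝ) 1 ∩ Set.range ((↑) : ℚ → ℝ))
    (hainj : Function.Injective a)
    (f : ℝ → ℝ)
    (hf : ∀ x, f x = ∑' n : ℕ, ((2 : ℝ)⁻¹) ^ (n + 1) * cbrt (x - a n)) :
    -- (1) `f` is continuous and strictly increasing on `[0,1]`, hence a homeomorphism
    -- onto `[f 0, f 1]`
    ContinuousOn f (Set.Icc 0 1) ∧ StrictMonoOn f (Set.Icc 0 1) ∧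
    (∃ φ : Set.Icc (0 : ℝ) 1 ≃ₜ Set.Icc (f 0) (f 1), ∀ x : Set.Icc (0 : ℝ) 1,
      (φ x : ℝ) = f (x : ℝ)) ∧
    -- (2)-(5): the inverse `g`
    ∃ g : ℝ → ℝ,
      (∀ x ∈ Set.Icc (0 : ℝ) 1, g (f x) = x) ∧
      (∀ y ∈ Set.Icc (f 0) (f 1), g y ∈ Set.Icc (0 : ℝ) 1 ∧ f (g y) = y) ∧
      -- (2) `g` is Lipschitz
      (∃ K : NNReal, LipschitzOnWith K g (Set.Icc (f 0) (f 1))) ∧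
      ∃ g' : ℝ → ℝ,
        -- (3) `g` is differentiable on the open interval
        (∀ y ∈ Set.Ioo (f 0) (f 1), HasDerivAt g (g' y) y) ∧
        -- (4) the derivative vanishes at every `f (a n)` with `a n ∈ (0,1)`,
        -- and the zero set of `g'` is dense in `(f 0, f 1)`
        (∀ n : ℕ, a n ∈ Set.Ioo (0 : ℝ) 1 → g' (f (a n)) = 0) ∧
        Set.Ioo (f 0) (f 1) ⊆ closure {y ∈ Set.Ioo (f 0) (f 1) | g' y = 0} ∧
        -- (5) `g'` does not vanish identically
        ¬ ∀ y ∈ Set.Ioo (f 0) (f 1), g' y = 0 := by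
  classical
  set c : ℕ → ℝ := fun n => ((2:ℝ)⁻¹) ^ (n+1) with hc_def
  have hc_pos : ∀ n, 0 < c n := fun n => by positivity
  have hc_eq : ∀ n, c n = ((2:ℝ)⁻¹)^n * 2⁻¹ := fun n => pow_succ _ _
  have hc_sum : Summable c := by
    refine Summable.congr ((summable_geometric_of_lt_one (r := (2:ℝ)⁻¹) (by norm_num) (by norm_num)).mul_right 2⁻¹) ?_
    intro n; rw [hc_eq]
  have hc_tsum : ∑' n, c n = 1 := by
    have : ∑' n, c n = (∑' n : ℕ, ((2:ℝ)⁻¹)^n) * 2⁻¹ := by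
      rw [← tsum_mul_right]; exact tsum_congr fun n => (hc_eq n)
    rw [this, tsum_geometric_of_lt_one (by norm_num) (by norm_num)]; norm_num
  have haIcc : ∀ n, a n ∈ Icc (0:ℝ) 1 := by
    intro n
    have : a n ∈ Set.range a := ⟨n, rfl⟩
    rw [ha] at this; exact this.1
  have habs : ∀ n, ∀ x ∈ Icc (0:ℝ) 1, |x - a n| ≤ 1 := by
    intro n x hx
    have h1 := (haIcc n).1; have h2 := (haIcc n).2
    rw [abs_le]; constructor <;> [linarith [hx.1]; linarith [hx.2]]
  have hsummable : ∀ y, Summable (fun n => c n * cbrt (y - a n)) := by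
    intro y
    apply Summable.of_norm_bounded (g := fun n => (2 + |y|) * c n) (hc_sum.mul_left _)
    intro n
    rw [norm_mul, Real.norm_eq_abs, Real.norm_eq_abs, abs_of_pos (hc_pos n)]
    have h1 : |cbrt (y - a n)| ≤ 1 + |y - a n| := cbrt_abs_le _
    have h2 : |y - a n| ≤ |y| + |a n| := abs_sub _ _
    have h3 : |a n| ≤ 1 := abs_le.2 ⟨by linarith [(haIcc n).1], (haIcc n).2⟩
    calc c n * |cbrt (y - a n)| ≤ c n * (2 + |y|) := by
          apply mul_le_mul_of_nonneg_left (by linarith) (hc_pos n).le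
      _ = (2 + |y|) * c n := mul_comm _ _
  have hsum_diff : ∀ x y : ℝ, Summable (fun n => c n * (cbrt (y - a n) - cbrt (x - a n))) := by
    intro x y
    refine Summable.congr ((hsummable y).sub (hsummable x)) ?_
    intro n; simp [mul_sub]
  have hdiff : ∀ x y : ℝ, f y - f x = ∑' n, c n * (cbrt (y - a n) - cbrt (x - a n)) := by
    intro x y
    rw [hf, hf, ← Summable.tsum_sub (hsummable y) (hsummable x)]
    exact tsum_congr fun n => by ring
  have KEY : ∀ x ∈ Icc (0:ℝ) 1, ∀ y ∈ Icc (0:ℝ) 1, x ≤ y → (y - x)/3 ≤ f y - f x := by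
    intro x hx y hy hxy
    rw [hdiff x y]
    have h0 : ∑' n, c n * ((y - x)/3) = (y - x)/3 := by
      rw [tsum_mul_right, hc_tsum, one_mul]
    rw [← h0]
    refine Summable.tsum_le_tsum ?_ (hc_sum.mul_right _) (hsum_diff x y)
    intro n
    have hkey := cbrt_key (habs n y hy) (habs n x hx) (by linarith : x - a n ≤ y - a n)
    have : (y - x)/3 ≤ cbrt (y - a n) - cbrt (x - a n) := by linarith
    exact mul_le_mul_of_nonneg_left this (hc_pos n).le
  have hmono : StrictMonoOn f (Icc (0:ℝ) 1) := by
    intro x hx y hy hxy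
    have := KEY x hx y hy hxy.le
    linarith
  have hcont2 : ContinuousOn f (Icc (-1:ℝ) 2) := by
    have hTU : TendstoUniformlyOn (fun (t : Finset ℕ) x => ∑ n ∈ t, c n * cbrt (x - a n))
        (fun x => ∑' n, c n * cbrt (x - a n)) atTop (Icc (-1:ℝ) 2) := by
      apply tendstoUniformlyOn_tsum (u := fun n => 4 * c n) (hc_sum.mul_left 4)
      intro n x hx
      rw [norm_mul, Real.norm_eq_abs, Real.norm_eq_abs, abs_of_pos (hc_pos n)]
      have h1 : |cbrt (x - a n)| ≤ 1 + |x - a n| := cbrt_abs_le _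
      have h2 : |x - a n| ≤ 2 := by
        rw [abs_le]; constructor
        · linarith [hx.1, (haIcc n).2]
        · linarith [hx.2, (haIcc n).1]
      calc c n * |cbrt (x - a n)| ≤ c n * 4 := by
            apply mul_le_mul_of_nonneg_left (by linarith) (hc_pos n).le
        _ = 4 * c n := mul_comm _ _
    have := hTU.continuousOn (Frequently.of_forall fun t => ?_)
    · exact this.congr fun x _ => hf x
    · exact (continuous_finset_sum t fun n _ =>
        continuous_const.mul (cbrt_continuous.comp (continuous_id.sub continuous_const))).continuousOn
  have hcont : ContinuousOn f (Icc (0:ℝ) 1) := hcont2.mono (Icc_subset_Icc (by norm_num) (by norm_num))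
  have hcontAt : ∀ x ∈ Ioo (0:ℝ) 1, ContinuousAt f x := by
    intro x hx
    exact hcont2.continuousAt (Icc_mem_nhds (by linarith [hx.1]) (by linarith [hx.2]))
  have h0m : (0:ℝ) ∈ Icc (0:ℝ) 1 := ⟨le_refl _, zero_le_one⟩
  have h1m : (1:ℝ) ∈ Icc (0:ℝ) 1 := ⟨zero_le_one, le_refl _⟩
  have hf01 : f 0 < f 1 := hmono h0m h1m one_pos
  have maps : ∀ x ∈ Icc (0:ℝ) 1, f x ∈ Icc (f 0) (f 1) := by
    intro x hx
    exact ⟨hmono.monotoneOn h0m hx hx.1, hmono.monotoneOn hx h1m hx.2⟩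
  have surj : Icc (f 0) (f 1) ⊆ f '' (Icc 0 1) := intermediate_value_Icc zero_le_one hcont
  set F : Icc (0:ℝ) 1 → Icc (f 0) (f 1) := fun x => ⟨f x, maps x x.2⟩ with hF_def
  have hFbij : Function.Bijective F := by
    constructor
    · intro x y hxy
      exact Subtype.ext (hmono.injOn x.2 y.2 (congrArg Subtype.val hxy))
    · intro y
      obtain ⟨x, hx, hfx⟩ := surj y.2
      exact ⟨⟨x, hx⟩, Subtype.ext hfx⟩
  have hFcont : Continuous F := Continuous.subtype_mk hcont.restrict _
  set φ : Icc (0:ℝ) 1 ≃ₜ Icc (f 0) (f 1) :=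
    Continuous.homeoOfEquivCompactToT2 (f := Equiv.ofBijective F hFbij) hFcont with hφ_def
  have hφ : ∀ x : Icc (0:ℝ) 1, (φ x : ℝ) = f (x : ℝ) := fun x => rfl
  set g : ℝ → ℝ := fun y => ((φ.symm (projIcc (f 0) (f 1) hf01.le y) : Icc (0:ℝ) 1) : ℝ) with hg_def
  have hg_cont : Continuous g :=
    continuous_subtype_val.comp (φ.symm.continuous.comp continuous_projIcc)
  have hg_mem : ∀ y, g y ∈ Icc (0:ℝ) 1 := fun y => (φ.symm (projIcc (f 0) (f 1) hf01.le y)).2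
  have hgf : ∀ x ∈ Icc (0:ℝ) 1, g (f x) = x := by
    intro x hx
    have h1 : projIcc (f 0) (f 1) hf01.le (f x) = ⟨f x, maps x hx⟩ := projIcc_of_mem _ (maps x hx)
    have h2 : φ ⟨x, hx⟩ = ⟨f x, maps x hx⟩ := rfl
    rw [hg_def]
    simp only [h1, ← h2, Homeomorph.symm_apply_apply]
  have hfg : ∀ y ∈ Icc (f 0) (f 1), f (g y) = y := by
    intro y hy
    have h1 : projIcc (f 0) (f 1) hf01.le y = ⟨y, hy⟩ := projIcc_of_mem _ hy
    have h2 : (φ (φ.symm ⟨y, hy⟩) : ℝ) = y := by rw [Homeomorph.apply_symm_apply]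
    rw [hg_def]
    simp only [h1]
    rw [← hφ (φ.symm ⟨y, hy⟩)] at *
    exact h2
  have hlip : LipschitzOnWith 3 g (Icc (f 0) (f 1)) := by
    apply LipschitzOnWith.of_dist_le_mul
    intro y₁ h₁ y₂ h₂
    rw [Real.dist_eq, Real.dist_eq]
    have key : ∀ z₁ ∈ Icc (f 0) (f 1), ∀ z₂ ∈ Icc (f 0) (f 1), g z₂ ≤ g z₁ →
        |g z₁ - g z₂| ≤ 3 * |z₁ - z₂| := by
      intro z₁ hz₁ z₂ hz₂ hgle
      have := KEY (g z₂) (hg_mem z₂) (g z₁) (hg_mem z₁) hgle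
      rw [hfg z₁ hz₁, hfg z₂ hz₂] at this
      rw [abs_of_nonneg (by linarith : (0:ℝ) ≤ g z₁ - g z₂)]
      calc g z₁ - g z₂ ≤ 3 * (z₁ - z₂) := by linarith
        _ ≤ 3 * |z₁ - z₂| := by nlinarith [le_abs_self (z₁ - z₂)]
    rcases le_total (g y₂) (g y₁) with h | h
    · simpa using key y₁ h₁ y₂ h₂ h
    · rw [abs_sub_comm (g y₁), abs_sub_comm y₁]
      simpa using key y₂ h₂ y₁ h₁ h
  -- ============ analytic part =============
  have hq_form : ∀ x y : ℝ, y ≠ x → ∀ n, (cbrt (y - a n) - cbrt (x - a n)) / (y - x)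
      = ((cbrt (y - a n))^2 + cbrt (y - a n) * cbrt (x - a n) + (cbrt (x - a n))^2)⁻¹ := by
    intro x y hyx n
    have hne : y - a n ≠ x - a n := fun h => hyx (by linarith)
    rw [show y - x = (y - a n) - (x - a n) by ring]
    exact cbrt_slope hne
  have hq_nonneg : ∀ x y : ℝ, ∀ n : ℕ,
      0 ≤ (cbrt (y - a n))^2 + cbrt (y - a n) * cbrt (x - a n) + (cbrt (x - a n))^2 := by
    intro x y n
    nlinarith [sq_nonneg (cbrt (y - a n) + cbrt (x - a n)), sq_nonneg (cbrt (y - a n)),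
      sq_nonneg (cbrt (x - a n))]
  have hterm_nonneg : ∀ x y : ℝ, y ≠ x → ∀ n : ℕ,
      0 ≤ c n * ((cbrt (y - a n) - cbrt (x - a n)) / (y - x)) := by
    intro x y hyx n
    rw [hq_form x y hyx n]
    exact mul_nonneg (hc_pos n).le (inv_nonneg.2 (hq_nonneg x y n))
  have hq_lb : ∀ x ∈ Icc (0:ℝ) 1, ∀ y ∈ Icc (0:ℝ) 1, ∀ n : ℕ, (y - x)^2/36 ≤
      (cbrt (y - a n))^2 + cbrt (y - a n) * cbrt (x - a n) + (cbrt (x - a n))^2 := by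
    intro x hx y hy n
    rcases le_total x y with h | h
    · have hkey := cbrt_key (habs n y hy) (habs n x hx) (by linarith : x - a n ≤ y - a n)
      nlinarith [sq_nonneg (cbrt (y - a n) + cbrt (x - a n)), hkey, h,
        cbrt_strictMono.monotone (show x - a n ≤ y - a n by linarith)]
    · have hkey := cbrt_key (habs n x hx) (habs n y hy) (by linarith : y - a n ≤ x - a n)
      nlinarith [sq_nonneg (cbrt (y - a n) + cbrt (x - a n)), hkey, h,
        cbrt_strictMono.monotone (show y - a n ≤ x - a n by linarith)]
  have hslope_summable : ∀ x ∈ Icc (0:ℝ) 1, ∀ y ∈ Icc (0:ℝ) 1, y ≠ x →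
      Summable (fun n => c n * ((cbrt (y - a n) - cbrt (x - a n)) / (y - x))) := by
    intro x hx y hy hyx
    apply Summable.of_norm_bounded (g := fun n => (36/(y-x)^2) * c n) (hc_sum.mul_left _)
    intro n
    rw [hq_form x y hyx n]
    have hyx' : y - x ≠ 0 := sub_ne_zero.2 hyx
    have hQpos : (0:ℝ) < (cbrt (y - a n))^2 + cbrt (y - a n) * cbrt (x - a n) + (cbrt (x - a n))^2 :=
      lt_of_lt_of_le (by positivity) (hq_lb x hx y hy n)
    rw [norm_mul, Real.norm_eq_abs, Real.norm_eq_abs, abs_of_pos (hc_pos n),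
      abs_of_nonneg (inv_nonneg.2 hQpos.le)]
    have hle : ((cbrt (y - a n))^2 + cbrt (y - a n) * cbrt (x - a n) + (cbrt (x - a n))^2)⁻¹
        ≤ 36/(y-x)^2 := by
      have h2 := inv_anti₀ (show (0:ℝ) < (y-x)^2/36 by positivity) (hq_lb x hx y hy n)
      rwa [inv_div] at h2
    calc c n * ((cbrt (y - a n))^2 + cbrt (y - a n) * cbrt (x - a n) + (cbrt (x - a n))^2)⁻¹
        ≤ c n * (36/(y-x)^2) := mul_le_mul_of_nonneg_left hle (hc_pos n).le
      _ = 36/(y-x)^2 * c n := mul_comm _ _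
  have hslope_tsum : ∀ x y : ℝ, y ≠ x →
      slope f x y = ∑' n, c n * ((cbrt (y - a n) - cbrt (x - a n)) / (y - x)) := by
    intro x y hyx
    rw [slope_def_field, hdiff x y, div_eq_mul_inv, ← tsum_mul_right]
    exact tsum_congr fun n => by ring
  set w : ℝ → ℕ → ℝ := fun x n => c n * ((cbrt (x - a n))^2)⁻¹ with hw_def
  have hw_nonneg : ∀ x n, 0 ≤ w x n := fun x n => by
    have := hc_pos n; positivity
  set D : ℝ → ℝ := fun x => ∑' n, c n * (3 * (cbrt (x - a n))^2)⁻¹ with hD_def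
  have hu_ne : ∀ x, x ∉ Set.range a → ∀ n, cbrt (x - a n) ≠ 0 := by
    intro x hx n h
    have h3 : (x - a n) = 0 := by
      rw [← cbrt_cube (x - a n), h]; norm_num
    exact hx ⟨n, by linarith⟩
  have hDsum : ∀ x, Summable (w x) → Summable (fun n => c n * (3 * (cbrt (x - a n))^2)⁻¹) := by
    intro x hs
    refine Summable.congr (hs.mul_left 3⁻¹) ?_
    intro n
    simp only [hw_def, mul_inv]
    ring
  have hDpos : ∀ x, x ∉ Set.range a → Summable (w x) → 0 < D x := by
    intro x hxa hs
    refine Summable.tsum_pos (hDsum x hs) (fun n => by positivity) 0 ?_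
    have h0 := hu_ne x hxa 0
    have := hc_pos 0
    positivity
  have hterm_tendsto : ∀ x : ℝ, ∀ n : ℕ, x - a n ≠ 0 →
      Tendsto (fun y => c n * ((cbrt (y - a n) - cbrt (x - a n)) / (y - x))) (𝓝[≠] x)
        (𝓝 (c n * (3 * (cbrt (x - a n))^2)⁻¹)) := by
    intro x n hxn
    have hd : HasDerivAt (fun y : ℝ => cbrt (y - a n)) ((3 * (cbrt (x - a n))^2)⁻¹) x := by
      have h1 := hasDerivAt_cbrt hxn
      have h2 := h1.comp x ((hasDerivAt_id x).sub_const (a n))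
      simpa [Function.comp_def] using h2
    have h3 := hasDerivAt_iff_tendsto_slope.1 hd
    have h4 : ∀ y : ℝ, slope (fun z => cbrt (z - a n)) x y
        = (cbrt (y - a n) - cbrt (x - a n)) / (y - x) := fun y => slope_def_field _ _ _
    exact Tendsto.const_mul (c n) (h3.congr h4)
  have hfderiv : ∀ x, x ∉ Set.range a → Summable (w x) → HasDerivAt f (D x) x := by
    intro x hxa hs
    rw [hasDerivAt_iff_tendsto_slope]
    have hmain : Tendsto (fun y => ∑' n, c n * ((cbrt (y - a n) - cbrt (x - a n)) / (y - x)))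
        (𝓝[≠] x) (𝓝 (D x)) := by
      apply tendsto_tsum_of_dominated_convergence (bound := fun n => 2 * w x n) (hs.mul_left 2)
      · intro n
        refine hterm_tendsto x n ?_
        intro h; exact (hu_ne x hxa n) (by rw [h, cbrt_zero])
      · refine eventually_nhdsWithin_of_forall ?_
        intro y hy n
        have hyx : y ≠ x := hy
        rw [hq_form x y hyx n]
        have huu : cbrt (x - a n) ≠ 0 := hu_ne x hxa n
        have hQge : (cbrt (x - a n))^2/2 ≤
            (cbrt (y - a n))^2 + cbrt (y - a n) * cbrt (x - a n) + (cbrt (x - a n))^2 := by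
          nlinarith [sq_nonneg (cbrt (y - a n) + cbrt (x - a n)/2), sq_nonneg (cbrt (x - a n))]
        have hQpos : (0:ℝ) < (cbrt (y - a n))^2 + cbrt (y - a n) * cbrt (x - a n) + (cbrt (x - a n))^2 :=
          lt_of_lt_of_le (by positivity) hQge
        have hinv : ((cbrt (y - a n))^2 + cbrt (y - a n) * cbrt (x - a n) + (cbrt (x - a n))^2)⁻¹
            ≤ 2 * ((cbrt (x - a n))^2)⁻¹ := by
          have h2 := inv_anti₀ (show (0:ℝ) < (cbrt (x - a n))^2/2 by positivity) hQge
          rw [inv_div] at h2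
          calc _ ≤ 2 / (cbrt (x - a n))^2 := h2
            _ = 2 * ((cbrt (x - a n))^2)⁻¹ := by rw [div_eq_mul_inv]
        rw [norm_mul, Real.norm_eq_abs, Real.norm_eq_abs, abs_of_pos (hc_pos n),
          abs_of_nonneg (inv_nonneg.2 hQpos.le)]
        calc c n * ((cbrt (y - a n))^2 + cbrt (y - a n) * cbrt (x - a n) + (cbrt (x - a n))^2)⁻¹
            ≤ c n * (2 * ((cbrt (x - a n))^2)⁻¹) := mul_le_mul_of_nonneg_left hinv (hc_pos n).le
          _ = 2 * w x n := by simp only [hw_def]; ring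
    exact hmain.congr' (eventually_nhdsWithin_of_forall (fun y hy => (hslope_tsum x y hy).symm)) |>.mono_left le_rfl
  have hdiverge : ∀ x ∈ Icc (0:ℝ) 1, (x ∈ Set.range a ∨ ¬ Summable (w x)) →
      Tendsto (slope f x) (𝓝[Icc 0 1 \ {x}] x) atTop := by
    intro x hx hbad
    by_cases hxra : x ∈ Set.range a
    · obtain ⟨m, hm⟩ := hxra
      have hlb : ∀ y ∈ Icc (0:ℝ) 1 \ {x}, c m * ((cbrt (y - x))^2)⁻¹ ≤ slope f x y := by
        intro y hy
        have hyx : y ≠ x := hy.2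
        rw [hslope_tsum x y hyx]
        have hterm : c m * ((cbrt (y - x))^2)⁻¹
            = c m * ((cbrt (y - a m) - cbrt (x - a m))/(y - x)) := by
          rw [hq_form x y hyx m, hm]
          rw [show x - x = 0 by ring, cbrt_zero]
          ring_nf
        rw [hterm]
        exact Summable.le_tsum (hslope_summable x hx y hy.1 hyx) m
          (fun n _ => hterm_nonneg x y hyx n)
      have htend : Tendsto (fun y => c m * ((cbrt (y - x))^2)⁻¹) (𝓝[Icc 0 1 \ {x}] x) atTop := by
        apply Tendsto.const_mul_atTop (hc_pos m)
        apply Tendsto.comp tendsto_inv_nhdsGT_zero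
        rw [tendsto_nhdsWithin_iff]
        constructor
        · have hc : Continuous (fun y : ℝ => (cbrt (y - x))^2) :=
            (cbrt_continuous.comp (continuous_id.sub continuous_const)).pow 2
          have := hc.continuousAt (x := x)
          rw [ContinuousAt] at this
          simp only [sub_self, cbrt_zero] at this
          norm_num at this
          exact this.mono_left nhdsWithin_le_nhds
        · filter_upwards [self_mem_nhdsWithin] with y hy
          have hyx : y ≠ x := hy.2
          have hne : cbrt (y - x) ≠ 0 := by
            intro h
            have h3 : (y - x) = 0 := by rw [← cbrt_cube (y - x), h]; norm_num
            exact hyx (by linarith)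
          exact mem_Ioi.2 (by positivity)
      refine tendsto_atTop_mono' _ ?_ htend
      filter_upwards [self_mem_nhdsWithin] with y hy using hlb y hy
    · have hnsum : ¬ Summable (w x) := by tauto
      rw [tendsto_atTop]
      intro M
      have hw3 : ¬ Summable (fun n => 3⁻¹ * w x n) := by
        intro h
        exact hnsum ((h.mul_left 3).congr (fun n => by ring))
      have hpartial := (not_summable_iff_tendsto_nat_atTop_of_nonneg
        (fun n => by have := hw_nonneg x n; positivity)).1 hw3
      obtain ⟨N, hN⟩ := (hpartial.eventually_ge_atTop (M + 1)).exists
      have hfin : Tendsto (fun y => ∑ n ∈ Finset.range N, c n * ((cbrt (y - a n) - cbrt (x - a n))/(y - x)))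
          (𝓝[Icc 0 1 \ {x}] x) (𝓝 (∑ n ∈ Finset.range N, c n * (3 * (cbrt (x - a n))^2)⁻¹)) := by
        apply tendsto_finset_sum
        intro n _
        have hxn : x - a n ≠ 0 := by
          intro h
          exact hxra ⟨n, by linarith⟩
        exact (hterm_tendsto x n hxn).mono_left (nhdsWithin_mono x (fun y hy => hy.2))
      have hsum_eq : ∑ n ∈ Finset.range N, c n * (3 * (cbrt (x - a n))^2)⁻¹
          = ∑ n ∈ Finset.range N, 3⁻¹ * w x n :=
        Finset.sum_congr rfl fun n _ => by simp only [hw_def, mul_inv]; ring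
      have hMlt : M < ∑ n ∈ Finset.range N, c n * (3 * (cbrt (x - a n))^2)⁻¹ := by
        rw [hsum_eq]; linarith
      have hev := hfin.eventually (eventually_gt_nhds hMlt)
      filter_upwards [hev, self_mem_nhdsWithin] with y h1 h2
      have hyx : y ≠ x := h2.2
      rw [hslope_tsum x y hyx]
      exact le_trans h1.le (Summable.sum_le_tsum (Finset.range N)
        (fun n _ => hterm_nonneg x y hyx n) (hslope_summable x hx y h2.1 hyx))
  have hIoo : ∀ x ∈ Ioo (0:ℝ) 1, f x ∈ Ioo (f 0) (f 1) := fun x hx =>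
    ⟨hmono h0m (Ioo_subset_Icc_self hx) hx.1, hmono (Ioo_subset_Icc_self hx) h1m hx.2⟩
  have hgderiv0 : ∀ x ∈ Ioo (0:ℝ) 1, (x ∈ Set.range a ∨ ¬ Summable (w x)) →
      HasDerivAt g 0 (f x) := by
    intro x hx hbad
    have hxI : x ∈ Icc (0:ℝ) 1 := Ioo_subset_Icc_self hx
    have hbm : f x ∈ Ioo (f 0) (f 1) := hIoo x hx
    rw [hasDerivAt_iff_tendsto_slope]
    have hgb : g (f x) = x := hgf x hxI
    have hIoonhd : Ioo (f 0) (f 1) ∈ 𝓝 (f x) := isOpen_Ioo.mem_nhds hbm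
    have h1 : Tendsto g (𝓝[≠] (f x)) (𝓝[Icc 0 1 \ {x}] x) := by
      rw [tendsto_nhdsWithin_iff]
      constructor
      · have h2 := hg_cont.continuousAt (x := f x)
        rw [ContinuousAt, hgb] at h2
        exact h2.mono_left nhdsWithin_le_nhds
      · filter_upwards [mem_nhdsWithin_of_mem_nhds hIoonhd, self_mem_nhdsWithin] with y hy1 hy2
        refine ⟨hg_mem y, ?_⟩
        intro hgy
        have hfgy : f (g y) = y := hfg y (Ioo_subset_Icc_self hy1)
        have : g y = x := hgy
        exact hy2 (show y = f x by rw [← hfgy, this])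
    have h2' : Tendsto (fun y => slope f x (g y)) (𝓝[≠] (f x)) atTop :=
      (hdiverge x hxI hbad).comp h1
    have h3 : Tendsto (fun y => (slope f x (g y))⁻¹) (𝓝[≠] (f x)) (𝓝 0) :=
      h2'.inv_tendsto_atTop
    apply h3.congr'
    filter_upwards [mem_nhdsWithin_of_mem_nhds hIoonhd, self_mem_nhdsWithin] with y hy1 hy2
    have hyb : y ≠ f x := hy2
    have hfgy : f (g y) = y := hfg y (Ioo_subset_Icc_self hy1)
    have hgyx : g y ≠ x := fun h => hyb (by rw [← hfgy, h])
    rw [slope_def_field, slope_def_field, inv_div, hgb, hfgy]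
  have hgderivD : ∀ x ∈ Ioo (0:ℝ) 1, x ∉ Set.range a → Summable (w x) →
      HasDerivAt g (D x)⁻¹ (f x) := by
    intro x hx hxa hs
    have hxI : x ∈ Icc (0:ℝ) 1 := Ioo_subset_Icc_self hx
    have hgb : g (f x) = x := hgf x hxI
    have hd : HasDerivAt f (D x) (g (f x)) := by rw [hgb]; exact hfderiv x hxa hs
    refine HasDerivAt.of_local_left_inverse hg_cont.continuousAt hd
      (ne_of_gt (hDpos x hxa hs)) ?_
    filter_upwards [isOpen_Ioo.mem_nhds (hIoo x hx)] with y hy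
    exact hfg y (Ioo_subset_Icc_self hy)
  set P : ℝ → Prop := fun x => x ∉ Set.range a ∧ Summable (w x) with hP_def
  set g' : ℝ → ℝ := fun y => if P (g y) then (D (g y))⁻¹ else 0 with hg'_def
  have hgIoo : ∀ y ∈ Ioo (f 0) (f 1), g y ∈ Ioo (0:ℝ) 1 ∧ f (g y) = y := by
    intro y hy
    have hyI : y ∈ Icc (f 0) (f 1) := Ioo_subset_Icc_self hy
    have hfgy := hfg y hyI
    have hm := hg_mem y
    refine ⟨⟨lt_of_le_of_ne hm.1 ?_, lt_of_le_of_ne hm.2 ?_⟩, hfgy⟩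
    · intro h
      rw [← h] at hfgy
      exact ne_of_gt hy.1 hfgy.symm
    · intro h
      rw [h] at hfgy
      exact ne_of_lt hy.2 hfgy.symm
  have hclause3 : ∀ y ∈ Ioo (f 0) (f 1), HasDerivAt g (g' y) y := by
    intro y hy
    obtain ⟨hgy, hfgy⟩ := hgIoo y hy
    by_cases hPy : P (g y)
    · have hder := hgderivD (g y) hgy hPy.1 hPy.2
      rw [hfgy] at hder
      have : g' y = (D (g y))⁻¹ := by rw [hg'_def]; simp only [if_pos hPy]
      rw [this]
      exact hder
    · have hbad : (g y ∈ Set.range a ∨ ¬ Summable (w (g y))) := by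
        by_cases h1 : g y ∈ Set.range a
        · exact Or.inl h1
        · exact Or.inr (fun h2 => hPy ⟨h1, h2⟩)
      have hder := hgderiv0 (g y) hgy hbad
      rw [hfgy] at hder
      have : g' y = 0 := by rw [hg'_def]; simp only [if_neg hPy]
      rw [this]
      exact hder
  have hclause4 : ∀ n : ℕ, a n ∈ Ioo (0:ℝ) 1 → g' (f (a n)) = 0 := by
    intro n _
    have hga : g (f (a n)) = a n := hgf (a n) (haIcc n)
    have hnP : ¬ P (g (f (a n))) := by
      rw [hga]
      intro hPP
      exact hPP.1 ⟨n, rfl⟩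
    rw [hg'_def]
    simp only [if_neg hnP]
  have hclause4b : Ioo (f 0) (f 1) ⊆ closure {y ∈ Ioo (f 0) (f 1) | g' y = 0} := by
    intro y hy
    obtain ⟨hgy, hfgy⟩ := hgIoo y hy
    rw [mem_closure_iff_nhds]
    intro U hU
    have hcf : ContinuousAt f (g y) := hcontAt (g y) hgy
    have hV : f ⁻¹' (U ∩ Ioo (f 0) (f 1)) ∈ 𝓝 (g y) := by
      apply hcf
      rw [hfgy]
      exact inter_mem hU (isOpen_Ioo.mem_nhds hy)
    obtain ⟨δ, hδpos, hball⟩ := Metric.mem_nhds_iff.1 hV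
    have hlt : max 0 (g y - δ/2) < g y := max_lt hgy.1 (by linarith)
    obtain ⟨q, hq1, hq2⟩ := exists_rat_btwn hlt
    have hq0 : (0:ℝ) < q := lt_of_le_of_lt (le_max_left 0 _) hq1
    have hq01 : (q:ℝ) ∈ Icc (0:ℝ) 1 := ⟨hq0.le, by linarith [hgy.2]⟩
    have hqr : (q:ℝ) ∈ Set.range a := by
      rw [ha]; exact ⟨hq01, ⟨q, rfl⟩⟩
    obtain ⟨m, hm⟩ := hqr
    have hdist : dist (a m) (g y) < δ := by
      rw [hm, Real.dist_eq, abs_lt]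
      have := le_max_right 0 (g y - δ/2)
      constructor
      · have := lt_of_le_of_lt (le_max_right 0 (g y - δ/2)) hq1
        linarith
      · linarith
    have hmem := hball (Metric.mem_ball.2 hdist)
    refine ⟨f (a m), hmem.1, hmem.2, ?_⟩
    have ham : a m ∈ Ioo (0:ℝ) 1 := by
      rw [hm]
      exact ⟨hq0, by linarith [hgy.2]⟩
    exact hclause4 m ham
  have hx0 : ∃ x₀ ∈ Ioo (0:ℝ) 1, x₀ ∉ Set.range a ∧ Summable (w x₀) := by
    set ε : ℕ → ℝ := fun n => (1/5) * (1/2)^n with hε_def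
    have hεpos : ∀ n, 0 < ε n := fun n => by positivity
    have hεsum : Summable (fun n => 2 * ε n) := by
      refine Summable.congr ((summable_geometric_of_lt_one (r := (1/2:ℝ))
        (by norm_num) (by norm_num)).mul_left (2/5)) ?_
      intro n
      rw [hε_def]
      ring
    have hU : ¬ (Icc (0:ℝ) 1 ⊆ ⋃ n, Metric.ball (a n) (ε n)) := by
      intro hsub
      have h1 : MeasureTheory.volume (Icc (0:ℝ) 1)
          ≤ MeasureTheory.volume (⋃ n, Metric.ball (a n) (ε n)) :=
        MeasureTheory.measure_mono hsub
      have h2 : MeasureTheory.volume (⋃ n, Metric.ball (a n) (ε n))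
          ≤ ∑' n, ENNReal.ofReal (2 * ε n) := by
        refine le_trans (MeasureTheory.measure_iUnion_le _) ?_
        refine ENNReal.tsum_le_tsum (fun n => ?_)
        rw [Real.volume_ball]
      have h3 : ∑' n, ENNReal.ofReal (2 * ε n) = ENNReal.ofReal (4/5) := by
        rw [← ENNReal.ofReal_tsum_of_nonneg (fun n => by positivity) hεsum]
        congr 1
        have heq : ∑' n : ℕ, 2 * ε n = ∑' n : ℕ, (2/5) * (1/2:ℝ)^n := by
          refine tsum_congr fun n => ?_
          rw [hε_def]; ring
        rw [heq, tsum_mul_left, tsum_geometric_of_lt_one (by norm_num) (by norm_num)]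
        norm_num
      have h4 : (ENNReal.ofReal (1 - 0) : ENNReal) ≤ ENNReal.ofReal (4/5) := by
        rw [← Real.volume_Icc (a := (0:ℝ)) (b := 1), ← h3]
        exact le_trans h1 h2
      rw [ENNReal.ofReal_le_ofReal_iff (by norm_num)] at h4
      linarith
    obtain ⟨x₀, hx₀I, hx₀U⟩ := not_subset.1 hU
    have hdist : ∀ n, ε n ≤ |x₀ - a n| := by
      intro n
      have hnb : x₀ ∉ Metric.ball (a n) (ε n) := fun h => hx₀U (mem_iUnion.2 ⟨n, h⟩)
      rw [Metric.mem_ball, Real.dist_eq] at hnb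
      linarith [not_lt.1 hnb]
    have hx₀ra : x₀ ∉ Set.range a := by
      rintro ⟨n, hn⟩
      have := hdist n
      rw [hn] at this
      simp at this
      linarith [hεpos n]
    have hx₀Ioo : x₀ ∈ Ioo (0:ℝ) 1 := by
      have h0r : (0:ℝ) ∈ Set.range a := by
        rw [ha]; exact ⟨⟨le_refl _, zero_le_one⟩, ⟨0, by norm_num⟩⟩
      have h1r : (1:ℝ) ∈ Set.range a := by
        rw [ha]; exact ⟨⟨zero_le_one, le_refl _⟩, ⟨1, by norm_num⟩⟩
      constructor
      · refine lt_of_le_of_ne hx₀I.1 ?_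
        intro h
        exact hx₀ra (h ▸ h0r)
      · refine lt_of_le_of_ne hx₀I.2 ?_
        intro h
        exact hx₀ra (h.symm ▸ h1r)
    refine ⟨x₀, hx₀Ioo, hx₀ra, ?_⟩
    set r := cbrt (1/2 : ℝ) with hr_def
    have hr3 : r^3 = 1/2 := cbrt_cube _
    have hrpos : 0 < r := by nlinarith [sq_nonneg r]
    have hrlt : r < 1 := by nlinarith [sq_nonneg r, sq_nonneg (r - 1), sq_nonneg (r + 1)]
    set K := cbrt (1/5 : ℝ) with hK_def
    have hK3 : K^3 = 1/5 := cbrt_cube _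
    have hKpos : 0 < K := by nlinarith [sq_nonneg K]
    have hcbrtε : ∀ n, cbrt (ε n) = K * r^n := by
      intro n
      rw [hε_def]
      simp only
      rw [cbrt_mul, cbrt_pow]
    have hmono2 : ∀ s t : ℝ, |s| ≤ |t| → (cbrt s)^2 ≤ (cbrt t)^2 := by
      intro s t hst
      have h1 : |cbrt s| ≤ |cbrt t| := by
        by_contra hcon
        push_neg at hcon
        have h2 : |cbrt t|^3 < |cbrt s|^3 :=
          pow_lt_pow_left₀ hcon (abs_nonneg _) (by norm_num)
        rw [← abs_pow, ← abs_pow, cbrt_cube, cbrt_cube] at h2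
        linarith
      calc (cbrt s)^2 = |cbrt s|^2 := (sq_abs _).symm
        _ ≤ |cbrt t|^2 := pow_le_pow_left₀ (abs_nonneg _) h1 2
        _ = (cbrt t)^2 := sq_abs _
    set ρ := 2⁻¹ * (r^2)⁻¹ with hρ_def
    have hρpos : 0 < ρ := by positivity
    have hρlt : ρ < 1 := by
      rw [hρ_def]
      rw [show (2:ℝ)⁻¹ = 1/2 by norm_num, ← hr3]
      have h2 : r^3 * (r^2)⁻¹ = r := by
        field_simp
      rw [h2]
      exact hrlt
    have hbsum : Summable (fun n => ((K^2)⁻¹ * 2⁻¹) * ρ^n) :=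
      (summable_geometric_of_lt_one hρpos.le hρlt).mul_left _
    refine Summable.of_nonneg_of_le (hw_nonneg x₀) (fun n => ?_) hbsum
    have hcb_pos : 0 < (cbrt (ε n))^2 := by
      rw [hcbrtε n]; positivity
    have hcb_le : (cbrt (ε n))^2 ≤ (cbrt (x₀ - a n))^2 := by
      apply hmono2
      rw [abs_of_pos (hεpos n)]
      exact hdist n
    have hinv : ((cbrt (x₀ - a n))^2)⁻¹ ≤ ((cbrt (ε n))^2)⁻¹ :=
      inv_anti₀ hcb_pos hcb_le
    calc w x₀ n ≤ c n * ((cbrt (ε n))^2)⁻¹ :=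
          mul_le_mul_of_nonneg_left hinv (hc_pos n).le
      _ = ((K^2)⁻¹ * 2⁻¹) * ρ^n := by
          rw [hcbrtε n, hρ_def, hc_eq n]
          rw [mul_pow, mul_inv, ← pow_mul, mul_comm n 2, pow_mul]
          rw [mul_pow, inv_pow, inv_pow]
          field_simp
  have hclause5 : ¬ ∀ y ∈ Ioo (f 0) (f 1), g' y = 0 := by
    intro hall
    obtain ⟨x₀, hx₀Ioo, hx₀ra, hx₀sum⟩ := hx0
    have h5 := hall (f x₀) (hIoo x₀ hx₀Ioo)
    have hg0 : g (f x₀) = x₀ := hgf _ (Ioo_subset_Icc_self hx₀Ioo)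
    have hPx : P (g (f x₀)) := by rw [hg0]; exact ⟨hx₀ra, hx₀sum⟩
    have : g' (f x₀) = (D (g (f x₀)))⁻¹ := by rw [hg'_def]; simp only [if_pos hPx]
    rw [this, hg0] at h5
    exact (ne_of_gt (inv_pos.2 (hDpos x₀ hx₀ra hx₀sum))) h5
  exact ⟨hcont, hmono, ⟨φ, hφ⟩, g, hgf, fun y hy => ⟨hg_mem y, hfg y hy⟩, ⟨3, hlip⟩,
    g', hclause3, hclause4, hclause4b, hclause5⟩
end
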